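/- arXiv:2412.10901 — 3 statements merged into one kernel-verified Lean document; each statement's English description precedes it below -/
import Mathlib

section
/- Let Γ = (V,E) be a directed strongly regular graph with parameters (v,k,t,λ,μ), let G be a group of automorphisms of Γ with vertex orbits O_1, …, O_b of sizes n_1, …, n_b, and for each i,j let c_{ij} = |{x ∈ O_i : (x,y) ∈ E}| for any (equivalently, every) y ∈ O_j. Then for all i,j, the entries of the column orbit matrix C = [c_{ij}] satisfy δ_{ij}(t−μ) + μ·n_i + (λ−μ)·c_{ij} = Σ_{z=1}^{b} c_{iz}·c_{zj}, where δ_{ij} is the Kronecker delta. -/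
open Matrix BigOperators

def adjM {V : Type} [Fintype V] (E : V → V → Bool) : Matrix V V ℤ :=
  Matrix.of fun x y => if E x y then 1 else 0

def IsDSRG {V : Type} [Fintype V] [DecidableEq V] (E : V → V → Bool)
    (v k t l m : ℕ) : Prop :=
  Fintype.card V = v ∧ (∀ x, E x x = false) ∧
  adjM E * adjM E + ((m : ℤ) - (l : ℤ)) • adjM E - ((t : ℤ) - (m : ℤ)) • (1 : Matrix V V ℤ)
    = (m : ℤ) • Matrix.of (fun _ _ => (1 : ℤ)) ∧
  adjM E * Matrix.of (fun _ _ => (1 : ℤ)) = (k : ℤ) • Matrix.of (fun _ _ => (1 : ℤ)) ∧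
  Matrix.of (fun _ _ => (1 : ℤ)) * adjM E = (k : ℤ) • Matrix.of (fun _ _ => (1 : ℤ))

def IsAut {V : Type} (E : V → V → Bool) (σ : Equiv.Perm V) : Prop :=
  ∀ x y, E (σ x) (σ y) = E x y

def autGroup {V : Type} (E : V → V → Bool) : Subgroup (Equiv.Perm V) where
  carrier := {σ | ∀ x y, E (σ x) (σ y) = E x y}
  one_mem' := fun _ _ => rfl
  mul_mem' := by
    intro a b ha hb x y
    simp only [Equiv.Perm.coe_mul, Function.comp_apply]
    rw [ha, hb]
  inv_mem' := by
    intro a ha x y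
    have := ha (a⁻¹ x) (a⁻¹ y)
    simpa using this.symm

def Iso {V W : Type} (E : V → V → Bool) (F : W → W → Bool) : Prop :=
  ∃ φ : V ≃ W, ∀ x y, F (φ x) (φ y) = E x y

/-- the entries of the column orbit matrix `C = [c i j]` of a DSRG with
respect to an automorphism group `G` with orbits `orbit G (rep 1), …, orbit G (rep b)`
satisfy `δ_{ij}(t−μ) + μ·n_i + (λ−μ)·c_{ij} = Σ_z c_{iz}·c_{zj}`. -/
theorem columnOrbitMatrix_equation {V : Type} [Fintype V] [DecidableEq V]
    (E : V → V → Bool) (v k t l m : ℕ) (hG : IsDSRG E v k t l m)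
    (G : Subgroup (Equiv.Perm V)) (hAut : ∀ σ ∈ G, IsAut E σ)
    (b : ℕ) (rep : Fin b → V)
    (hcover : ∀ x : V, ∃ i, x ∈ MulAction.orbit G (rep i))
    (hdistinct : ∀ i j : Fin b,
      MulAction.orbit G (rep i) = MulAction.orbit G (rep j) → i = j)
    (c : Fin b → Fin b → ℕ)
    (hc : ∀ i j : Fin b, ∀ y ∈ MulAction.orbit G (rep j),
        Set.ncard {x ∈ MulAction.orbit G (rep i) | E x y = true} = c i j)
    (i j : Fin b) :
    (if i = j then ((t : ℤ) - (m : ℤ)) else 0)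
      + (m : ℤ) * (Set.ncard (MulAction.orbit G (rep i)) : ℤ)
      + ((l : ℤ) - (m : ℤ)) * (c i j : ℤ)
      = ∑ z : Fin b, (c i z : ℤ) * (c z j : ℤ) := by

  classical
  obtain ⟨hv, hloop, heq, hr, hcl⟩ := hG
  set A := adjM E with hA
  set yj := rep j with hyj
  set O : Fin b → Finset V :=
    fun z => Finset.univ.filter (fun x => x ∈ MulAction.orbit G (rep z)) with hO
  have hmemO : ∀ z x, x ∈ O z ↔ x ∈ MulAction.orbit G (rep z) := by
    intro z x; simp [hO]
  have hcsum : ∀ z j' : Fin b, ∀ y ∈ MulAction.orbit G (rep j'),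
      (∑ x ∈ O z, A x y) = (c z j' : ℤ) := by
    intro z j' y hy
    have h1 : (∑ x ∈ O z, A x y) = (((O z).filter (fun x => E x y)).card : ℤ) := by
      rw [Finset.card_filter]
      push_cast
      refine Finset.sum_congr rfl fun x _ => ?_
      simp [hA, adjM]
    rw [h1]
    have h2 : ({x ∈ MulAction.orbit G (rep z) | E x y = true} : Set V)
        = ↑((O z).filter (fun x => E x y)) := by
      ext x; simp [hmemO]
    have h3 := hc z j' y hy
    rw [h2, Set.ncard_coe_finset] at h3
    exact_mod_cast h3
  have hrepj : yj ∈ MulAction.orbit G (rep j) := MulAction.mem_orbit_self _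
  have horb : ∀ (z : Fin b) (w : V), w ∈ MulAction.orbit G (rep z) →
      ∀ z' : Fin b, w ∈ MulAction.orbit G (rep z') → z = z' := by
    intro z w hw z' hw'
    have e1 : MulAction.orbit G (rep z) = MulAction.orbit G w :=
      (MulAction.orbit_eq_iff.mpr hw).symm
    have e2 : MulAction.orbit G (rep z') = MulAction.orbit G w :=
      (MulAction.orbit_eq_iff.mpr hw').symm
    exact hdistinct z z' (e1.trans e2.symm)
  choose phi hphi using hcover
  have hfz : ∀ z : Fin b, Finset.univ.filter (fun w => phi w = z) = O z := by
    intro z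
    ext w
    simp only [Finset.mem_filter, Finset.mem_univ, true_and, hmemO]
    constructor
    · rintro rfl; exact hphi w
    · intro hw; exact (horb (phi w) w (hphi w) z hw).symm ▸ rfl
  have hent : ∀ x : V, (A * A) x yj + ((m : ℤ) - l) * A x yj
      - ((t : ℤ) - m) * (1 : Matrix V V ℤ) x yj = (m : ℤ) := by
    intro x
    have h := congrFun (congrFun heq x) yj
    simp only [Matrix.add_apply, Matrix.sub_apply, Matrix.smul_apply, Matrix.of_apply,
      smul_eq_mul, mul_one] at h
    exact h
  have hS2 : (∑ x ∈ O i, (A * A) x yj) = ∑ z : Fin b, (c i z : ℤ) * (c z j : ℤ) := by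
    have hswap : (∑ x ∈ O i, (A * A) x yj) = ∑ w : V, (∑ x ∈ O i, A x w) * A w yj := by
      simp only [Matrix.mul_apply]
      rw [Finset.sum_comm]
      simp [Finset.sum_mul]
    rw [hswap, ← Finset.sum_fiberwise Finset.univ phi
      (fun w => (∑ x ∈ O i, A x w) * A w yj)]
    refine Finset.sum_congr rfl fun z _ => ?_
    rw [hfz z]
    calc ∑ w ∈ O z, (∑ x ∈ O i, A x w) * A w yj
        = ∑ w ∈ O z, (c i z : ℤ) * A w yj := by
          refine Finset.sum_congr rfl fun w hw => ?_
          rw [hcsum i z w ((hmemO z w).mp hw)]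
      _ = (c i z : ℤ) * ∑ w ∈ O z, A w yj := by rw [Finset.mul_sum]
      _ = (c i z : ℤ) * (c z j : ℤ) := by rw [hcsum z j yj hrepj]
  have hS1 : (∑ x ∈ O i, A x yj) = (c i j : ℤ) := hcsum i j yj hrepj
  have hSd : (∑ x ∈ O i, (1 : Matrix V V ℤ) x yj) = (if i = j then (1 : ℤ) else 0) := by
    have : (∑ x ∈ O i, (1 : Matrix V V ℤ) x yj)
        = ∑ x ∈ O i, (if x = yj then (1 : ℤ) else 0) := by
      refine Finset.sum_congr rfl fun x _ => ?_
      rw [Matrix.one_apply]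
    rw [this, Finset.sum_ite_eq' (O i) yj (fun _ => (1 : ℤ))]
    congr 1
    simp only [hmemO, eq_iff_iff]
    constructor
    · intro hmem; exact (horb i yj hmem j hrepj)
    · rintro rfl; exact hrepj
  have hcard : (Set.ncard (MulAction.orbit G (rep i)) : ℤ) = ((O i).card : ℤ) := by
    have hs : MulAction.orbit G (rep i) = ↑(O i) := by
      ext x; simp [hmemO]
    rw [hs, Set.ncard_coe_finset]
  have hsum : (∑ x ∈ O i, ((A * A) x yj + ((m : ℤ) - l) * A x yj
      - ((t : ℤ) - m) * (1 : Matrix V V ℤ) x yj)) = ((O i).card : ℤ) * (m : ℤ) := by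
    calc (∑ x ∈ O i, ((A * A) x yj + ((m : ℤ) - l) * A x yj
        - ((t : ℤ) - m) * (1 : Matrix V V ℤ) x yj))
        = ∑ _x ∈ O i, (m : ℤ) := Finset.sum_congr rfl (fun x _ => hent x)
      _ = ((O i).card : ℤ) * (m : ℤ) := by simp [mul_comm]
  rw [Finset.sum_sub_distrib, Finset.sum_add_distrib, ← Finset.mul_sum,
    ← Finset.mul_sum, hS2, hS1, hSd] at hsum
  rw [hcard]
  by_cases hij : i = j <;> simp only [hij, if_true, if_false] at hsum ⊢ <;> linarith
end

section
/- No directed strongly regular graph with parameters (22,9,6,3,4) admits an automorphism of order 13, an automorphism of order 17, or an automorphism of order 19. -/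
open Matrix BigOperators

theorem key {V : Type} [Fintype V] [DecidableEq V]
    (E : V → V → Bool) (hG : IsDSRG E 22 9 6 3 4)
    (σ : Equiv.Perm V) (hσ : IsAut E σ) (p : ℕ) (hp : p.Prime)
    (h13 : 13 ≤ p) (h21 : p ≤ 21) : orderOf σ ≠ p := by
  intro ho
  haveI : Fact p.Prime := ⟨hp⟩
  obtain ⟨hcard, hloop, _, hrow, _⟩ := hG
  have hσ1 : σ ≠ 1 := by
    intro h; rw [h, orderOf_one] at ho; omega
  -- fixed points of the zpowers action are the fixed points of σ
  have hfix : MulAction.fixedPoints (Subgroup.zpowers σ) V = {y | σ y = y} := by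
    ext y
    constructor
    · intro h; exact h ⟨σ, Subgroup.mem_zpowers σ⟩
    · intro h g
      obtain ⟨n, hn⟩ := g.2
      show (g : Equiv.Perm V) y = y
      rw [← hn]
      exact Equiv.Perm.zpow_apply_eq_self_of_apply_eq_self h n
  set F : Finset V := Finset.univ.filter (fun y => σ y = y) with hF
  have hFcard : Nat.card (MulAction.fixedPoints (Subgroup.zpowers σ) V) = F.card := by
    rw [hfix, Nat.card_coe_set_eq, Set.ncard_eq_toFinset_card']
    congr 1
    ext y
    simp [hF]
  have hpg : IsPGroup p (Subgroup.zpowers σ) := by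
    apply IsPGroup.of_card (n := 1)
    rw [Nat.card_zpowers, ho, pow_one]
  have hmod : 22 ≡ F.card [MOD p] := by
    have := hpg.card_modEq_card_fixedPoints V
    rwa [Nat.card_eq_fintype_card, hcard, hFcard] at this
  have hFle : F.card ≤ 22 := by
    rw [← hcard, ← Finset.card_univ]
    exact Finset.card_le_card (Finset.filter_subset _ _)
  have hFlt : F.card < 22 := by
    rcases eq_or_lt_of_le hFle with h | h
    · exfalso
      apply hσ1
      ext y
      have hFu : F = Finset.univ := Finset.eq_univ_of_card F (by rw [h, hcard])
      have : y ∈ F := hFu ▸ Finset.mem_univ y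
      simpa [hF] using this
    · exact h
  have hFval : F.card = 22 - p := by
    have hd : p ∣ 22 - F.card := (Nat.modEq_iff_dvd' (le_of_lt hFlt)).mp hmod.symm
    obtain ⟨c, hc⟩ := hd
    have hc1 : c = 1 := by nlinarith [Nat.sub_le 22 F.card, Nat.sub_pos_of_lt hFlt]
    rw [hc1, mul_one] at hc
    omega
  -- pick a fixed vertex
  have hFpos : 0 < F.card := by omega
  obtain ⟨x, hxF⟩ := Finset.card_pos.mp hFpos
  have hx : σ x = x := by simpa [hF] using hxF
  set N : Finset V := Finset.univ.filter (fun y => E x y = true) with hN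
  -- out-degree 9
  have h9 : N.card = 9 := by
    have h := congrFun (congrFun hrow x) x
    simp only [Matrix.mul_apply, Matrix.smul_apply, Matrix.of_apply, adjM, smul_eq_mul,
      mul_one] at h
    rw [Finset.sum_boole] at h
    have : (N.card : ℤ) = 9 := by
      rw [hN]; convert h using 2; norm_num
    exact_mod_cast this
  have hxN : x ∉ N := by simp [hN, hloop x]
  -- N is closed under σ
  have hstep : ∀ z ∈ N, σ z ∈ N := by
    intro z hz
    have : E x (σ z) = E x z := by
      have := hσ x z; rwa [hx] at this
    simp only [hN, Finset.mem_filter, Finset.mem_univ, true_and] at hz ⊢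
    rw [this]; exact hz
  -- every element of N is fixed
  have hNF : N ⊆ F := by
    intro y hy
    by_contra hyF
    have hymoved : σ y ≠ y := by simpa [hF] using hyF
    have hper : Function.IsPeriodicPt (⇑σ) p y := by
      show σ^[p] y = y
      rw [← Equiv.Perm.coe_pow, ← ho, pow_orderOf_eq_one]
      rfl
    have hmin : Function.minimalPeriod (⇑σ) y = p := by
      rcases (Nat.Prime.eq_one_or_self_of_dvd hp _ hper.minimalPeriod_dvd) with h | h
      · exact absurd (Function.minimalPeriod_eq_one_iff_isFixedPt.mp h) hymoved
      · exact h
    have hiter : ∀ n : ℕ, σ^[n] y ∈ N := by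
      intro n
      induction n with
      | zero => exact hy
      | succ n ih => rw [Function.iterate_succ_apply']; exact hstep _ ih
    have hinj : Set.InjOn (fun n => σ^[n] y) (Set.Iio p) := by
      rw [← hmin]; exact Function.iterate_injOn_Iio_minimalPeriod
    have hle : p ≤ N.card := by
      have := Finset.card_le_card_of_injOn (fun n => σ^[n] y)
        (fun n hn => hiter n) (fun a ha b hb hab => hinj (by simpa using ha) (by simpa using hb) hab)
        (s := Finset.range p)
      simpa using this
    omega
  -- contradiction: N ⊆ F.erase x with |F| ≤ 9
  have : N ⊆ F.erase x := fun y hy =>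
    Finset.mem_erase.mpr ⟨fun h => hxN (h ▸ hy), hNF hy⟩
  have := Finset.card_le_card this
  rw [Finset.card_erase_of_mem hxF] at this
  omega


/-- no DSRG(22,9,6,3,4) admits an automorphism of order 13, 17 or 19. -/
theorem no_automorphism_of_order_13_17_19 {V : Type} [Fintype V] [DecidableEq V]
    (E : V → V → Bool) (hG : IsDSRG E 22 9 6 3 4)
    (σ : Equiv.Perm V) (hσ : IsAut E σ) :
    orderOf σ ≠ 13 ∧ orderOf σ ≠ 17 ∧ orderOf σ ≠ 19 :=
  ⟨key E hG σ hσ 13 (by norm_num) (by norm_num) (by norm_num),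
   key E hG σ hσ 17 (by norm_num) (by norm_num) (by norm_num),
   key E hG σ hσ 19 (by norm_num) (by norm_num) (by norm_num)⟩
end

section
/- There exists a directed strongly regular graph with parameters (22,9,6,3,4). -/
open Matrix BigOperators

def dsrgRows : Fin 22 → Nat := ![1153428,1324705,423457,2726224,3160453,2319434,516138,2851154,2736344,870542,3838241,3899480,271919,1704286,1320741,1971521,19119,2722004,2153168,1189646,290339,286384]

def dsrgE (x y : Fin 22) : Bool := (dsrgRows x).testBit y.val

instance : DecidableEq (Matrix (Fin 22) (Fin 22) ℤ) :=
  fun A B => decidable_of_iff (∀ i j : Fin 22, Matrix.of.symm A i j = Matrix.of.symm B i j)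
    ⟨fun h => by ext i j; exact h i j, fun h i j => by rw [h]⟩

set_option maxHeartbeats 4000000 in
/-- there exists a directed strongly regular graph with parameters
(22,9,6,3,4). -/
theorem exists_DSRG_22_9_6_3_4 :
    ∃ E : Fin 22 → Fin 22 → Bool, IsDSRG E 22 9 6 3 4 := by
  refine ⟨dsrgE, ?_⟩
  unfold IsDSRG
  decide
end
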